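/- Karamata's Abelian theorem: let μ be a positive Radon measure on [0,∞) with Ψ_μ(λ) := ∫ e^{−λx} μ(dx) < ∞ for all λ > 0, and let ρ ≥ 0. If F_μ(tx)/F_μ(t) → x^ρ as t → ∞ for every x > 0 (with F_μ(t) > 0 for large t), then Ψ_μ(τλ)/Ψ_μ(τ) → λ^{−ρ} as τ ↓ 0 for every λ > 0, and Ψ_μ(1/t) ∼ Γ(ρ+1) F_μ(t) as t → ∞. -/

import Mathlib

open MeasureTheory Filter Topology Set
open scoped NNReal ENNReal

lemma kar_aux_exp {l : ℝ} (hl : 0 < l) (c : ℝ) :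
    ∫ s in Ioi c, l * Real.exp (-(l*s)) = Real.exp (-(l*c)) := by
  have h := integral_comp_mul_left_Ioi (fun x => Real.exp (-x)) c hl
  simp only [integral_exp_neg_Ioi, smul_eq_mul] at h
  rw [MeasureTheory.integral_const_mul, h]
  field_simp

lemma kar_aux_exp_lint {l : ℝ} (hl : 0 < l) (c : ℝ) :
    ∫⁻ s in Ioi c, ENNReal.ofReal (l * Real.exp (-(l*s))) = ENNReal.ofReal (Real.exp (-(l*c))) := by
  rw [← ofReal_integral_eq_lintegral_ofReal]
  · rw [kar_aux_exp hl c]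
  · simpa [neg_mul] using (exp_neg_integrableOn_Ioi c hl).const_mul l
  · filter_upwards with s using by positivity

lemma kar_aux_fubini (μ : Measure ℝ≥0) [SigmaFinite μ] {l : ℝ} (hl : 0 < l) :
    ∫⁻ x, ENNReal.ofReal (Real.exp (-(l * (x:ℝ)))) ∂μ
      = ∫⁻ s in Ioi (0:ℝ), ENNReal.ofReal (l * Real.exp (-(l*s))) * μ {x : ℝ≥0 | (x:ℝ) ≤ s} := by
  set f : ℝ≥0 → ℝ → ℝ≥0∞ := fun x s =>
    Set.indicator (Ici (x:ℝ)) (fun s => ENNReal.ofReal (l * Real.exp (-(l*s)))) s with hf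
  have hmeas : Measurable (Function.uncurry f) := by
    have : Function.uncurry f = Set.indicator {p : ℝ≥0 × ℝ | (p.1:ℝ) ≤ p.2}
        (fun p => ENNReal.ofReal (l * Real.exp (-(l*p.2)))) := by
      ext p
      simp only [Function.uncurry, hf, Set.indicator_apply, mem_Ici, mem_setOf_eq]
    rw [this]
    apply Measurable.indicator
    · exact (by fun_prop : Measurable fun p : ℝ≥0 × ℝ => l * Real.exp (-(l * p.2))).ennreal_ofReal
    · exact measurableSet_le (measurable_coe_nnreal_real.comp measurable_fst) measurable_snd
  have h1 : ∀ x : ℝ≥0, ∫⁻ s, f x s = ENNReal.ofReal (Real.exp (-(l * (x:ℝ)))) := by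
    intro x
    show ∫⁻ s, (Ici (x:ℝ)).indicator (fun s => ENNReal.ofReal (l * Real.exp (-(l*s)))) s = _
    rw [lintegral_indicator measurableSet_Ici,
      setLIntegral_congr (Ioi_ae_eq_Ici (a := (x:ℝ))).symm]
    exact kar_aux_exp_lint hl _
  calc ∫⁻ x, ENNReal.ofReal (Real.exp (-(l * (x:ℝ)))) ∂μ
      = ∫⁻ x, ∫⁻ s, f x s ∂volume ∂μ := lintegral_congr fun x => (h1 x).symm
    _ = ∫⁻ s, ∫⁻ x, f x s ∂μ ∂volume := lintegral_lintegral_swap hmeas.aemeasurable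
    _ = ∫⁻ s, ENNReal.ofReal (l * Real.exp (-(l*s))) * μ {x : ℝ≥0 | (x:ℝ) ≤ s} ∂volume := by
        apply lintegral_congr
        intro s
        have : ∀ x : ℝ≥0, f x s = Set.indicator {x : ℝ≥0 | (x:ℝ) ≤ s}
            (fun _ => ENNReal.ofReal (l * Real.exp (-(l*s)))) x := by
          intro x; simp only [hf, Set.indicator_apply, mem_Ici, mem_setOf_eq]
        rw [lintegral_congr this, lintegral_indicator_const]
        exact (isClosed_le NNReal.continuous_coe continuous_const).measurableSet
    _ = ∫⁻ s in Ioi (0:ℝ), ENNReal.ofReal (l * Real.exp (-(l*s))) * μ {x : ℝ≥0 | (x:ℝ) ≤ s} := by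
        rw [← lintegral_indicator measurableSet_Ioi]
        apply lintegral_congr_ae
        have hne : ∀ᵐ s : ℝ, s ≠ 0 := by
          rw [ae_iff]; simpa using Real.volume_singleton
        filter_upwards [hne] with s hs
        rcases lt_or_gt_of_ne hs with h | h
        · have : {x : ℝ≥0 | (x:ℝ) ≤ s} = ∅ := by
            ext x; simp only [mem_setOf_eq, mem_empty_iff_false, iff_false, not_le]
            exact lt_of_lt_of_le h x.coe_nonneg
          simp [this, Set.indicator_apply, h.not_gt]
        · simp [Set.indicator_apply, h]

lemma kar_aux_setfin (μ : Measure ℝ≥0) [IsLocallyFiniteMeasure μ] (s : ℝ) :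
    μ {x : ℝ≥0 | (x:ℝ) ≤ s} ≠ ⊤ := by
  have h1 : {x : ℝ≥0 | (x:ℝ) ≤ s} ⊆ Iic s.toNNReal := by
    intro x hx
    simp only [mem_setOf_eq] at hx
    simp only [mem_Iic, ← NNReal.coe_le_coe]
    exact le_trans hx (by rw [Real.coe_toNNReal']; exact le_max_left _ _)
  have h2 : IsCompact (Iic s.toNNReal) := by rw [← Icc_bot]; exact isCompact_Icc
  exact ne_top_of_le_ne_top h2.measure_lt_top.ne (measure_mono h1)

lemma kar_aux_cov {t : ℝ} (ht : 0 < t) (Fr : ℝ → ℝ) :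
    ∫ s in Ioi (0:ℝ), (1/t) * Real.exp (-(1/t * s)) * Fr s
      = ∫ u in Ioi (0:ℝ), Real.exp (-u) * Fr (t*u) := by
  have h := integral_comp_mul_left_Ioi (fun s => (1/t) * Real.exp (-(1/t * s)) * Fr s) 0 ht
  rw [mul_zero] at h
  have h2 : ∀ u : ℝ, (fun s => (1/t) * Real.exp (-(1/t * s)) * Fr s) (t*u)
      = (1/t) * (Real.exp (-u) * Fr (t*u)) := by
    intro u
    simp only
    rw [show 1/t * (t*u) = u by field_simp]
    ring
  calc ∫ s in Ioi (0:ℝ), (1/t) * Real.exp (-(1/t * s)) * Fr s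
      = t * (t⁻¹ • ∫ s in Ioi (0:ℝ), (1/t) * Real.exp (-(1/t * s)) * Fr s) := by
        rw [smul_eq_mul, ← mul_assoc, mul_inv_cancel₀ ht.ne', one_mul]
    _ = t * ∫ u in Ioi (0:ℝ), (1/t) * (Real.exp (-u) * Fr (t*u)) := by
        rw [← h]; congr 1; exact integral_congr_ae (Filter.Eventually.of_forall fun u => h2 u)
    _ = ∫ u in Ioi (0:ℝ), Real.exp (-u) * Fr (t*u) := by
        rw [MeasureTheory.integral_const_mul, ← mul_assoc, mul_one_div, div_self ht.ne', one_mul]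

lemma kar_aux_pow {F : ℝ≥0 → ℝ} (hmono : Monotone F) {C : ℝ} (hC : 1 ≤ C) {T : ℝ≥0}
    (hdbl : ∀ t : ℝ≥0, T ≤ t → F (t*2) ≤ C * F t) {t : ℝ≥0} (ht : T ≤ t) :
    ∀ n : ℕ, F (t * 2^n) ≤ C^n * F t := by
  intro n; induction n with
  | zero => simp
  | succ n ih =>
    have hle : T ≤ t * 2^n :=
      le_trans ht (le_mul_of_one_le_right zero_le (one_le_pow_of_one_le' one_le_two n))
    calc F (t * 2^(n+1)) = F ((t*2^n)*2) := congrArg F (by ring)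
      _ ≤ C * F (t*2^n) := hdbl _ hle
      _ ≤ C * (C^n * F t) := mul_le_mul_of_nonneg_left ih (by linarith)
      _ = C^(n+1) * F t := by ring

lemma kar_aux_potter {F : ℝ≥0 → ℝ} (hmono : Monotone F) {ρ : ℝ} (hρ : 0 ≤ ρ) {T : ℝ≥0}
    (hTpos : ∀ t : ℝ≥0, T ≤ t → 0 < F t)
    (hdbl : ∀ t : ℝ≥0, T ≤ t → F (t*2) ≤ (2:ℝ)^(ρ+1) * F t)
    {t : ℝ≥0} (ht : T ≤ t) (v : ℝ≥0) :
    F (t * v) ≤ (2:ℝ)^(ρ+1) * (1 + (v:ℝ)^(ρ+1)) * F t := by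
  set C : ℝ := (2:ℝ)^(ρ+1) with hCdef
  have hC : 1 ≤ C := by
    rw [hCdef, show (1:ℝ) = (2:ℝ)^(0:ℝ) by simp]
    exact Real.rpow_le_rpow_of_exponent_le one_le_two (by linarith)
  have hFt : 0 < F t := hTpos t ht
  rcases le_or_gt v 1 with hv | hv
  · have h1 : F (t*v) ≤ F t := hmono (mul_le_of_le_one_right zero_le hv)
    have h2 : (1:ℝ) ≤ C * (1 + (v:ℝ)^(ρ+1)) := by
      have : (0:ℝ) ≤ (v:ℝ)^(ρ+1) := Real.rpow_nonneg v.coe_nonneg _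
      nlinarith
    nlinarith
  · set n : ℕ := ⌈Real.logb 2 (v:ℝ)⌉₊ with hn
    have hv1 : (1:ℝ) < (v:ℝ) := by exact_mod_cast hv
    have hlogpos : 0 < Real.logb 2 (v:ℝ) := Real.logb_pos one_lt_two hv1
    have hub : Real.logb 2 (v:ℝ) ≤ (n:ℝ) := Nat.le_ceil _
    have hlb : (n:ℝ) ≤ Real.logb 2 (v:ℝ) + 1 := by
      have := Nat.ceil_lt_add_one hlogpos.le (a := Real.logb 2 (v:ℝ))
      rw [hn]; push_cast; linarith
    have hveq : (2:ℝ) ^ (Real.logb 2 (v:ℝ)) = (v:ℝ) :=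
      Real.rpow_logb two_pos (by norm_num) (by linarith)
    have h2n_ge : (v:ℝ) ≤ (2:ℝ)^(n:ℝ) := by
      rw [← hveq]; exact Real.rpow_le_rpow_of_exponent_le one_le_two hub
    have h2n_le : (2:ℝ)^(n:ℝ) ≤ 2 * (v:ℝ) := by
      calc (2:ℝ)^(n:ℝ) ≤ (2:ℝ)^(Real.logb 2 (v:ℝ) + 1) :=
            Real.rpow_le_rpow_of_exponent_le one_le_two hlb
        _ = 2 * (v:ℝ) := by rw [Real.rpow_add two_pos, hveq, Real.rpow_one]; ring
    have hvn : v ≤ 2^n := by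
      rw [← NNReal.coe_le_coe]
      push_cast
      rw [← Real.rpow_natCast]
      exact h2n_ge
    have hCn : C^n = ((2:ℝ)^(n:ℝ))^(ρ+1) := by
      rw [hCdef, ← Real.rpow_natCast ((2:ℝ)^(ρ+1)) n,
        ← Real.rpow_mul (by norm_num : (0:ℝ) ≤ 2),
        ← Real.rpow_mul (by norm_num : (0:ℝ) ≤ 2), mul_comm]
    have hCnle : C^n ≤ C * (v:ℝ)^(ρ+1) := by
      rw [hCn, hCdef]
      calc ((2:ℝ)^(n:ℝ))^(ρ+1) ≤ (2 * (v:ℝ))^(ρ+1) :=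
            Real.rpow_le_rpow (Real.rpow_nonneg (by norm_num) _) h2n_le (by linarith)
        _ = (2:ℝ)^(ρ+1) * (v:ℝ)^(ρ+1) := Real.mul_rpow (by norm_num) v.coe_nonneg
    calc F (t*v) ≤ F (t * 2^n) := hmono (mul_le_mul_right hvn t)
      _ ≤ C^n * F t := kar_aux_pow hmono hC hdbl ht n
      _ ≤ (C * (v:ℝ)^(ρ+1)) * F t := mul_le_mul_of_nonneg_right hCnle hFt.le
      _ ≤ C * (1 + (v:ℝ)^(ρ+1)) * F t := by nlinarith

lemma kar_aux_chain : ∀ (a b c d : ℝ), c ≠ 0 → d ≠ 0 → a/c * (c/d) * (d/b) = a/b := by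
  intro a b c d hc hd
  rcases eq_or_ne b 0 with hb | hb
  · simp [hb]
  · field_simp

/-- Karamata's Abelian theorem. Let `μ` be a positive Radon measure on
`[0,∞)` with finite Laplace transform `Ψ_μ` on `(0,∞)` and `ρ ≥ 0`. If
`F_μ(tx)/F_μ(t) → x^ρ` as `t → ∞` for all `x > 0` (with `F_μ(t) > 0` for large `t`),
then `Ψ_μ(τλ)/Ψ_μ(τ) → λ^{-ρ}` as `τ ↓ 0` for all `λ > 0`, and
`Ψ_μ(1/t) ∼ Γ(ρ+1) F_μ(t)` as `t → ∞`. -/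
theorem karamata_abelian (μ : Measure ℝ≥0)
    [IsLocallyFiniteMeasure μ] (hreg : μ.InnerRegular)
    (hfin : ∀ l : ℝ, 0 < l →
      (∫⁻ x, ENNReal.ofReal (Real.exp (-(l * (x : ℝ)))) ∂μ) ≠ ⊤)
    (Ψ : ℝ → ℝ) (hΨ : ∀ l : ℝ, Ψ l = (∫⁻ x, ENNReal.ofReal (Real.exp (-(l * (x : ℝ)))) ∂μ).toReal)
    (F : ℝ≥0 → ℝ) (hFdef : ∀ t : ℝ≥0, F t = (μ (Set.Iic t)).toReal)
    (ρ : ℝ) (hρ : 0 ≤ ρ)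
    (hpos : ∀ᶠ t : ℝ≥0 in atTop, 0 < F t)
    (hF : ∀ x : ℝ≥0, 0 < x →
      Tendsto (fun t : ℝ≥0 => F (t * x) / F t) atTop (𝓝 ((x : ℝ) ^ ρ))) :
    (∀ l : ℝ, 0 < l →
      Tendsto (fun τ : ℝ => Ψ (τ * l) / Ψ τ) (𝓝[>] 0) (𝓝 (l ^ (-ρ)))) ∧
    Tendsto (fun t : ℝ≥0 => Ψ (1 / (t : ℝ)) / (Real.Gamma (ρ + 1) * F t)) atTop (𝓝 1) := by
  have hμfin := kar_aux_setfin μ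
  set Fr : ℝ → ℝ := fun s => (μ {x : ℝ≥0 | (x:ℝ) ≤ s}).toReal with hFr
  have hμmono : Monotone (fun s : ℝ => μ {x : ℝ≥0 | (x:ℝ) ≤ s}) :=
    fun a b hab => measure_mono (fun x hx => le_trans hx hab)
  have hFrmono : Monotone Fr := fun a b hab => ENNReal.toReal_mono (hμfin b) (hμmono hab)
  have hFrnn : ∀ s, 0 ≤ Fr s := fun s => ENNReal.toReal_nonneg
  have hIicfin : ∀ t : ℝ≥0, μ (Iic t) ≠ ⊤ := fun t => by
    have h2 : IsCompact (Iic t) := by rw [← Icc_bot]; exact isCompact_Icc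
    exact h2.measure_lt_top.ne
  have hFmono : Monotone F := by
    intro a b hab; rw [hFdef a, hFdef b]
    exact ENNReal.toReal_mono (hIicfin b) (measure_mono (Iic_subset_Iic.mpr hab))
  have hFreq : ∀ s : ℝ, 0 ≤ s → Fr s = F s.toNNReal := by
    intro s hs
    have hset : {x : ℝ≥0 | (x:ℝ) ≤ s} = Iic s.toNNReal := by
      ext x; simp [Real.le_toNNReal_iff_coe_le hs]
    rw [hFr]; simp only; rw [hset, hFdef]
  have hΨformula : ∀ l : ℝ, 0 < l →
      Ψ l = ∫ s in Ioi (0:ℝ), l * Real.exp (-(l*s)) * Fr s := by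
    intro l hl
    rw [hΨ l, kar_aux_fubini μ hl]
    have hm : AEMeasurable (fun s : ℝ => ENNReal.ofReal (l * Real.exp (-(l*s)))
        * μ {x : ℝ≥0 | (x:ℝ) ≤ s}) (volume.restrict (Ioi 0)) :=
      (((by fun_prop : Measurable fun s : ℝ => l * Real.exp (-(l*s))).ennreal_ofReal).mul
        hμmono.measurable).aemeasurable
    have hae : ∀ᵐ s ∂(volume.restrict (Ioi (0:ℝ))),
        ENNReal.ofReal (l * Real.exp (-(l*s))) * μ {x : ℝ≥0 | (x:ℝ) ≤ s} < ⊤ :=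
      Filter.Eventually.of_forall fun s =>
        ENNReal.mul_lt_top ENNReal.ofReal_lt_top (hμfin s).lt_top
    rw [← integral_toReal hm hae]
    apply integral_congr_ae
    filter_upwards with s
    rw [ENNReal.toReal_mul, ENNReal.toReal_ofReal (by positivity)]
  have hkey : ∀ t : ℝ≥0, 0 < t →
      Ψ (1/(t:ℝ)) / F t = ∫ u in Ioi (0:ℝ), Real.exp (-u) * (Fr ((t:ℝ)*u) / F t) := by
    intro t ht
    have htR : (0:ℝ) < (t:ℝ) := NNReal.coe_pos.mpr ht
    rw [hΨformula (1/(t:ℝ)) (by positivity), kar_aux_cov htR Fr, ← MeasureTheory.integral_div]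
    apply integral_congr_ae
    filter_upwards with u
    rw [mul_div_assoc]
  have hGamma : ∫ u in Ioi (0:ℝ), Real.exp (-u) * u^ρ = Real.Gamma (ρ+1) := by
    rw [Real.Gamma_eq_integral (by linarith : (0:ℝ) < ρ+1)]
    norm_num
  have hC1 : (1:ℝ) ≤ (2:ℝ)^(ρ+1) := by
    rw [show (1:ℝ) = (2:ℝ)^(0:ℝ) by simp]
    exact Real.rpow_le_rpow_of_exponent_le one_le_two (by linarith)
  have h2ρ : (1:ℝ) ≤ (2:ℝ)^ρ := by
    rw [show (1:ℝ) = (2:ℝ)^(0:ℝ) by simp]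
    exact Real.rpow_le_rpow_of_exponent_le one_le_two hρ
  have hev : ∀ᶠ t : ℝ≥0 in atTop, 0 < F t ∧ F (t*2) ≤ (2:ℝ)^(ρ+1) * F t := by
    have hlt : ((2:ℝ≥0):ℝ)^ρ < (2:ℝ)^ρ + 1 := by norm_num
    filter_upwards [hpos, (hF 2 (by norm_num)).eventually_lt_const hlt] with t h1 h2
    refine ⟨h1, ?_⟩
    rw [div_lt_iff₀ h1] at h2
    have h3 : (2:ℝ)^(ρ+1) = (2:ℝ)^ρ * 2 := by
      rw [Real.rpow_add two_pos, Real.rpow_one]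
    push_cast at h2
    nlinarith
  obtain ⟨T, hT⟩ := eventually_atTop.mp hev
  set bound : ℝ → ℝ :=
    fun u => (2:ℝ)^(ρ+1) * Real.exp (-u) + (2:ℝ)^(ρ+1) * (Real.exp (-u) * u^(ρ+1)) with hbd
  have hbound_int : IntegrableOn bound (Ioi (0:ℝ)) := by
    apply Integrable.add
    · have h0 : IntegrableOn (fun u : ℝ => Real.exp (-u)) (Ioi (0:ℝ)) := by
        simpa using exp_neg_integrableOn_Ioi (0:ℝ) one_pos
      exact h0.const_mul _
    · have h := Real.GammaIntegral_convergent (s := ρ+2) (by linarith)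
      have heq : (fun x:ℝ => Real.exp (-x) * x^(ρ+2-1)) = fun x => Real.exp (-x) * x^(ρ+1) := by
        funext u; congr 1; ring
      rw [heq] at h
      exact h.const_mul _
  have hFrval : ∀ (t : ℝ≥0) (u : ℝ), 0 < u → Fr ((t:ℝ)*u) = F (t * u.toNNReal) := by
    intro t u hu
    rw [hFreq _ (by positivity)]
    congr 1
    rw [Real.toNNReal_mul t.coe_nonneg, Real.toNNReal_coe]
  have hDCT : Tendsto (fun t : ℝ≥0 => ∫ u in Ioi (0:ℝ), Real.exp (-u) * (Fr ((t:ℝ)*u) / F t))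
      atTop (𝓝 (Real.Gamma (ρ+1))) := by
    rw [← hGamma]
    apply tendsto_integral_filter_of_dominated_convergence bound
    · apply Filter.Eventually.of_forall; intro t
      have hmono2 : Monotone (fun u : ℝ => Fr ((t:ℝ)*u)) := by
        intro a b hab
        exact hFrmono (mul_le_mul_of_nonneg_left hab t.coe_nonneg)
      exact ((Real.measurable_exp.comp measurable_neg).mul
        (hmono2.measurable.div_const _)).aestronglyMeasurable
    · refine eventually_atTop.mpr ⟨T, fun t ht' => ?_⟩
      filter_upwards [ae_restrict_mem measurableSet_Ioi] with u hu
      have hu0 : (0:ℝ) < u := hu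
      obtain ⟨hFt, _⟩ := hT t ht'
      have hucoe : ((u.toNNReal : ℝ≥0) : ℝ) = u := Real.coe_toNNReal u hu0.le
      have hpotter := kar_aux_potter hFmono hρ (fun s hs => (hT s hs).1)
        (fun s hs => (hT s hs).2) ht' u.toNNReal
      rw [hucoe] at hpotter
      rw [← hFrval t u hu0] at hpotter
      have hratio : Fr ((t:ℝ)*u) / F t ≤ (2:ℝ)^(ρ+1) * (1 + u^(ρ+1)) := by
        rw [div_le_iff₀ hFt]
        exact hpotter
      have hnn : 0 ≤ Real.exp (-u) * (Fr ((t:ℝ)*u) / F t) :=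
        mul_nonneg (Real.exp_nonneg _) (div_nonneg (hFrnn _) hFt.le)
      rw [Real.norm_eq_abs, abs_of_nonneg hnn]
      calc Real.exp (-u) * (Fr ((t:ℝ)*u) / F t)
          ≤ Real.exp (-u) * ((2:ℝ)^(ρ+1) * (1 + u^(ρ+1))) :=
            mul_le_mul_of_nonneg_left hratio (Real.exp_nonneg _)
        _ = bound u := by rw [hbd]; ring
    · exact hbound_int
    · filter_upwards [ae_restrict_mem measurableSet_Ioi] with u hu
      have hu0 : (0:ℝ) < u := hu
      have hunn : (0:ℝ≥0) < u.toNNReal := Real.toNNReal_pos.mpr hu0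
      have hucoe : ((u.toNNReal : ℝ≥0) : ℝ) = u := Real.coe_toNNReal u hu0.le
      have h := hF u.toNNReal hunn
      rw [hucoe] at h
      have h2 := h.const_mul (Real.exp (-u))
      apply h2.congr
      intro t
      rw [hFrval t u hu0]
  have hmain : Tendsto (fun t : ℝ≥0 => Ψ (1/(t:ℝ)) / F t) atTop (𝓝 (Real.Gamma (ρ+1))) := by
    apply hDCT.congr'
    filter_upwards [eventually_gt_atTop 0] with t ht
    exact (hkey t ht).symm
  have hΓpos : 0 < Real.Gamma (ρ+1) := Real.Gamma_pos_of_pos (by linarith)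
  have part2 : Tendsto (fun t : ℝ≥0 => Ψ (1 / (t : ℝ)) / (Real.Gamma (ρ + 1) * F t))
      atTop (𝓝 1) := by
    have h := hmain.div_const (Real.Gamma (ρ+1))
    rw [div_self hΓpos.ne'] at h
    apply h.congr
    intro t
    rw [div_div, mul_comm]
  refine ⟨?_, part2⟩
  intro l hl
  set x : ℝ≥0 := (l⁻¹).toNNReal with hx
  have hxpos : 0 < x := Real.toNNReal_pos.mpr (by positivity)
  have hxcoe : (x:ℝ) = l⁻¹ := Real.coe_toNNReal _ (by positivity)
  set m : ℝ → ℝ≥0 := fun τ => (τ⁻¹).toNNReal with hm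
  have hmt : Tendsto m (𝓝[>] (0:ℝ)) atTop :=
    tendsto_real_toNNReal_atTop.comp tendsto_inv_nhdsGT_zero
  have hml : Tendsto (fun τ : ℝ => τ * l) (𝓝[>] (0:ℝ)) (𝓝[>] (0:ℝ)) := by
    rw [tendsto_nhdsWithin_iff]
    constructor
    · have h0 : Tendsto (fun τ : ℝ => τ * l) (𝓝 0) (𝓝 (0*l)) :=
        (continuous_id.mul continuous_const).tendsto 0
      rw [zero_mul] at h0
      exact h0.mono_left nhdsWithin_le_nhds
    · filter_upwards [self_mem_nhdsWithin] with τ hτ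
      exact mul_pos hτ hl
  have hmeq : ∀ᶠ τ in 𝓝[>] (0:ℝ), m (τ * l) = m τ * x := by
    filter_upwards [self_mem_nhdsWithin] with τ hτ
    have hτ0 : (0:ℝ) < τ := hτ
    show ((τ*l)⁻¹).toNNReal = (τ⁻¹).toNNReal * (l⁻¹).toNNReal
    rw [mul_inv, Real.toNNReal_mul (by positivity)]
  have hmml : Tendsto (fun τ => m (τ*l)) (𝓝[>] (0:ℝ)) atTop := hmt.comp hml
  have hmmlx : Tendsto (fun τ => m τ * x) (𝓝[>] (0:ℝ)) atTop := Tendsto.congr' hmeq hmml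
  have t1 : Tendsto ((fun t : ℝ≥0 => Ψ (1/(t:ℝ)) / F t) ∘ (fun τ => m τ * x))
      (𝓝[>] (0:ℝ)) (𝓝 (Real.Gamma (ρ+1))) := hmain.comp hmmlx
  have t2 : Tendsto ((fun t : ℝ≥0 => F (t * x) / F t) ∘ m) (𝓝[>] (0:ℝ)) (𝓝 ((x:ℝ)^ρ)) :=
    (hF x hxpos).comp hmt
  have t3 : Tendsto ((fun t : ℝ≥0 => F t / Ψ (1/(t:ℝ))) ∘ m) (𝓝[>] (0:ℝ))
      (𝓝 ((Real.Gamma (ρ+1))⁻¹)) := by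
    have h := ((hmain.comp hmt).inv₀ hΓpos.ne')
    apply h.congr
    intro τ
    simp only [Function.comp_apply, Pi.inv_apply]
    rw [inv_div]
  have tall := (t1.mul t2).mul t3
  have hval : Real.Gamma (ρ+1) * (x:ℝ)^ρ * (Real.Gamma (ρ+1))⁻¹ = l^(-ρ) := by
    rw [hxcoe, Real.inv_rpow hl.le, ← Real.rpow_neg hl.le, mul_comm, ← mul_assoc,
      inv_mul_cancel₀ hΓpos.ne', one_mul]
  rw [hval] at tall
  have hp1 : ∀ᶠ τ in 𝓝[>] (0:ℝ), 0 < F (m τ * x) := hmmlx.eventually hpos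
  have hp2 : ∀ᶠ τ in 𝓝[>] (0:ℝ), 0 < F (m τ) := hmt.eventually hpos
  apply tall.congr'
  filter_upwards [hmeq, self_mem_nhdsWithin, hp1, hp2] with τ heq hτ h1 h2
  have hτ0 : (0:ℝ) < τ := hτ
  have e2 : (1:ℝ)/((m τ : ℝ≥0):ℝ) = τ := by
    show (1:ℝ)/((τ⁻¹).toNNReal : ℝ) = τ
    rw [Real.coe_toNNReal _ (by positivity), one_div, inv_inv]
  have e1 : (1:ℝ)/((m τ * x : ℝ≥0):ℝ) = τ * l := by
    rw [← heq]
    show (1:ℝ)/(((τ*l)⁻¹).toNNReal : ℝ) = τ * l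
    rw [Real.coe_toNNReal _ (by positivity), one_div, inv_inv]
  simp only [Function.comp_apply]
  rw [e1, e2]
  exact kar_aux_chain _ _ _ _ h1.ne' h2.ne'
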